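/- Let n be an even natural number with 4 ≤ n and let κ, η be real numbers with η ≤ κ. Then WI(n,κ,η) = (n²/8)·(κ+η)·[4 ∣ n] + (n/2)·(((n−2)/4)·κ + ((n+2)/4)·η)·[¬(4 ∣ n)] + Σ_{k=1}^{n/2−1} (n·k/2)·(κ + η), i.e. the Wiener index decomposes as the antipodal contribution plus the contributions of pairs at each cycle distance k with 1 ≤ k < n/2, and the contribution at each such k is (n·k/2)·(κ + η). -/

import Mathlib

/-- Edge weight: the edge from `i` to `i+1` has weight `κ` if `i.val` is even,
and `η` if `i.val` is odd. -/
noncomputable def w (n : ℕ) (κ η : ℝ) (i : ZMod n) : ℝ :=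
  if Even i.val then κ else η

/-- Forward arc weight: `A u k = Σ_{j=0}^{k-1} w (u + j)`. -/
noncomputable def A (n : ℕ) (κ η : ℝ) (u : ZMod n) (k : ℕ) : ℝ :=
  ∑ j ∈ Finset.range k, w n κ η (u + (j : ZMod n))

/-- Cycle distance: `min (m, n - m)` where `v = u + m`, `0 ≤ m < n`. -/
def cdist (n : ℕ) (u v : ZMod n) : ℕ :=
  min (v - u).val (n - (v - u).val)

/-- Geodesic weight between `u` and `v`. -/
noncomputable def ds (n : ℕ) (κ η : ℝ) (u v : ZMod n) : ℝ :=
  if u = v then 0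
  else if cdist n u v < n / 2 then
    (if v = u + (cdist n u v : ZMod n) then A n κ η u (cdist n u v)
     else A n κ η v (cdist n u v))
  else min (A n κ η u (n / 2)) (A n κ η v (n / 2))

/-- Wiener index: sum of `ds` over unordered pairs of distinct vertices. -/
noncomputable def WI (n : ℕ) [NeZero n] (κ η : ℝ) : ℝ :=
  (1 / 2) * ∑ u : ZMod n, ∑ v : ZMod n, ds n κ η u v

lemma zmod_sum_range (n : ℕ) [NeZero n] (f : ZMod n → ℝ) :
    ∑ u : ZMod n, f u = ∑ m ∈ Finset.range n, f (m : ZMod n) := by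
  refine Finset.sum_nbij' (i := fun u => u.val) (j := fun m => (m : ZMod n)) ?_ ?_ ?_ ?_ ?_
  · simp [ZMod.val_lt]
  · simp
  · simp [ZMod.natCast_zmod_val]
  · intro a ha
    simp only [Finset.mem_range] at ha
    simp [ZMod.val_natCast, Nat.mod_eq_of_lt ha]
  · simp

lemma zmod_sum_shift (n : ℕ) [NeZero n] (f : ZMod n → ℝ) (c : ZMod n) :
    ∑ u : ZMod n, f (u + c) = ∑ u : ZMod n, f u :=
  Fintype.sum_equiv (Equiv.addRight c) _ _ (fun _ => rfl)

lemma parity_val_add (n : ℕ) [NeZero n] (hE : Even n) (u : ZMod n) (j : ℕ) :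
    Even (u + (j : ZMod n)).val ↔ Even (u.val + j) := by
  obtain ⟨t, ht⟩ := hE
  have h2 : 2 ∣ n := ⟨t, by omega⟩
  rw [ZMod.val_add, ZMod.val_natCast]
  rw [Nat.even_iff, Nat.even_iff, Nat.mod_mod_of_dvd _ h2, Nat.add_mod, Nat.mod_mod_of_dvd _ h2,
    ← Nat.add_mod]

lemma w_add (n : ℕ) [NeZero n] (hE : Even n) (κ η : ℝ) (u : ZMod n) (j : ℕ) :
    w n κ η (u + (j : ZMod n)) = if Even (u.val + j) then κ else η := by
  rw [w, if_congr (parity_val_add n hE u j) rfl rfl]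

lemma sum_if_even (t : ℕ) (κ η : ℝ) :
    ∑ m ∈ Finset.range (2 * t), (if Even m then κ else η) = (t : ℝ) * (κ + η) := by
  induction t with
  | zero => simp
  | succ s ih =>
    have h1 : 2 * (s + 1) = (2 * s) + 1 + 1 := by ring
    rw [h1, Finset.sum_range_succ, Finset.sum_range_succ, ih]
    have h2 : Even (2 * s) := even_two_mul s
    have h3 : ¬ Even (2 * s + 1) := by simp [Nat.even_add_one, h2]
    rw [if_pos h2, if_neg h3]
    push_cast
    ring

lemma sum_w (n : ℕ) [NeZero n] (hE : Even n) (κ η : ℝ) :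
    ∑ u : ZMod n, w n κ η u = ((n / 2 : ℕ) : ℝ) * (κ + η) := by
  rw [zmod_sum_range]
  have : ∀ m ∈ Finset.range n, w n κ η (m : ZMod n) = if Even m then κ else η := by
    intro m hm
    simp only [Finset.mem_range] at hm
    rw [w, ZMod.val_natCast, Nat.mod_eq_of_lt hm]
  rw [Finset.sum_congr rfl this]
  obtain ⟨t, ht⟩ := hE
  have h1 : n = 2 * t := by omega
  rw [h1, Nat.mul_div_cancel_left _ two_pos, sum_if_even]

lemma A_formula (n : ℕ) [NeZero n] (hE : Even n) (κ η : ℝ) (u : ZMod n) (k : ℕ) :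
    A n κ η u k = if Even u.val then (((k+1)/2 : ℕ) : ℝ) * κ + ((k/2 : ℕ) : ℝ) * η
      else ((k/2 : ℕ) : ℝ) * κ + (((k+1)/2 : ℕ) : ℝ) * η := by
  induction k with
  | zero => simp [A]
  | succ m ih =>
    rw [A, Finset.sum_range_succ, ← A, ih, w_add n hE]
    rcases Nat.even_or_odd u.val with hu | hu <;> rcases Nat.even_or_odd m with hm | hm
    · have he : Even (u.val + m) := hu.add hm
      rw [Nat.even_iff] at hm
      have c1 : (m+1+1)/2 = (m+1)/2 + 1 := by omega
      have c2 : (m+1)/2 = m/2 := by omega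
      simp only [if_pos hu, if_pos he, c1, c2]
      push_cast; ring
    · have he : ¬ Even (u.val + m) := by
        rw [Nat.even_add]; simp [hu, Nat.not_even_iff_odd.mpr hm]
      rw [Nat.odd_iff] at hm
      have c1 : (m+1+1)/2 = (m+1)/2 := by omega
      have c2 : (m+1)/2 = m/2 + 1 := by omega
      simp only [if_pos hu, if_neg he, c1, c2]
      push_cast; ring
    · have he : ¬ Even (u.val + m) := by
        rw [Nat.even_add]; simp [hm, Nat.not_even_iff_odd.mpr hu]
      rw [Nat.even_iff] at hm
      have c1 : (m+1+1)/2 = (m+1)/2 + 1 := by omega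
      have c2 : (m+1)/2 = m/2 := by omega
      simp only [if_neg (Nat.not_even_iff_odd.mpr hu), if_neg he, c1, c2]
      push_cast; ring
    · have he : Even (u.val + m) := Odd.add_odd hu hm
      rw [Nat.odd_iff] at hm
      have c1 : (m+1+1)/2 = (m+1)/2 := by omega
      have c2 : (m+1)/2 = m/2 + 1 := by omega
      simp only [if_neg (Nat.not_even_iff_odd.mpr hu), if_pos he, c1, c2]
      push_cast; ring

lemma sum_A (n : ℕ) [NeZero n] (hE : Even n) (κ η : ℝ) (k : ℕ) :
    ∑ u : ZMod n, A n κ η u k = (k : ℝ) * (((n / 2 : ℕ) : ℝ) * (κ + η)) := by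
  simp only [A]
  rw [Finset.sum_comm]
  have : ∀ j ∈ Finset.range k, ∑ u : ZMod n, w n κ η (u + (j : ZMod n))
      = ((n / 2 : ℕ) : ℝ) * (κ + η) := fun j _ => by
    rw [zmod_sum_shift, sum_w n hE]
  rw [Finset.sum_congr rfl this, Finset.sum_const, Finset.card_range, nsmul_eq_mul]

lemma ds_formula (n : ℕ) [NeZero n] (hE : Even n) (κ η : ℝ) (u : ZMod n) (m : ℕ)
    (hm : m < n) (hm0 : m ≠ 0) :
    ds n κ η u (u + (m : ZMod n)) =
      if m < n / 2 then A n κ η u m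
      else if m = n / 2 then
        min (A n κ η u (n / 2)) (A n κ η (u + (m : ZMod n)) (n / 2))
      else A n κ η (u + (m : ZMod n)) (n - m) := by
  have hsub : (u + (m : ZMod n)) - u = (m : ZMod n) := add_sub_cancel_left u _
  have hval : ((m : ZMod n)).val = m := ZMod.val_natCast_of_lt hm
  have hcd : cdist n u (u + (m : ZMod n)) = min m (n - m) := by
    rw [cdist, hsub, hval]
  have hne : u ≠ u + (m : ZMod n) := by
    intro h
    have h0 : (m : ZMod n) = 0 := by
      have := h.symm
      rwa [add_eq_left] at this
    rw [ZMod.natCast_eq_zero_iff] at h0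
    have := Nat.le_of_dvd (Nat.pos_of_ne_zero hm0) h0
    omega
  obtain ⟨t, ht⟩ := hE
  have hn2 : n / 2 = t := by omega
  rw [ds, if_neg hne, hcd, hn2]
  rcases lt_trichotomy m t with h1 | h1 | h1
  · have hmin : min m (n - m) = m := by omega
    rw [hmin, if_pos h1, if_pos h1, if_pos rfl]
  · have hmin : min m (n - m) = t := by omega
    rw [hmin, if_neg (lt_irrefl t), if_neg (by omega : ¬ m < t), if_pos h1]
  · have hmin : min m (n - m) = n - m := by omega
    have h2 : n - m < t := by omega
    rw [hmin, if_pos h2, if_neg (by omega : ¬ m < t), if_neg (by omega : m ≠ t)]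
    have hcond : ¬ (u + (m : ZMod n) = u + ((n - m : ℕ) : ZMod n)) := by
      intro h
      have h3 : ((m : ℕ) : ZMod n) = ((n - m : ℕ) : ZMod n) := add_left_cancel h
      have h4 : ((m : ℕ) : ZMod n).val = ((n - m : ℕ) : ZMod n).val := by rw [h3]
      rw [hval, ZMod.val_natCast_of_lt (by omega : n - m < n)] at h4
      omega
    rw [if_neg hcond]

lemma antipodal (n : ℕ) [NeZero n] (hE : Even n) (h4 : 4 ≤ n) (κ η : ℝ) (hηκ : η ≤ κ)
    (u : ZMod n) :
    min (A n κ η u (n / 2)) (A n κ η (u + ((n / 2 : ℕ) : ZMod n)) (n / 2)) =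
      if 4 ∣ n then ((n / 4 : ℕ) : ℝ) * (κ + η)
      else ((n / 2 / 2 : ℕ) : ℝ) * κ + ((n / 2 / 2 + 1 : ℕ) : ℝ) * η := by
  have hpar : Even ((u + ((n / 2 : ℕ) : ZMod n)).val) ↔ Even (u.val + n / 2) :=
    parity_val_add n hE u (n / 2)
  rw [A_formula n hE, A_formula n hE]
  by_cases hd : 4 ∣ n
  · have e1 : (n / 2 + 1) / 2 = n / 2 / 2 := by omega
    have e2 : n / 2 / 2 = n / 4 := by omega
    rw [e1, e2, ite_self, ite_self, min_self, if_pos hd]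
    push_cast; ring
  · obtain ⟨t, ht⟩ := hE
    have hodd : ¬ Even (n / 2) := by
      rw [Nat.even_iff]; omega
    have e1 : (n / 2 + 1) / 2 = n / 2 / 2 + 1 := by
      rw [Nat.even_iff] at hodd; omega
    rw [if_neg hd, e1]
    rcases Nat.even_or_odd u.val with hu | hu
    · have hv : ¬ Even ((u + ((n / 2 : ℕ) : ZMod n)).val) := by
        rw [hpar, Nat.even_add]
        simp [hu, hodd]
      rw [if_pos hu, if_neg hv]
      have : ((n / 2 / 2 : ℕ) : ℝ) * κ + ((n / 2 / 2 + 1 : ℕ) : ℝ) * η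
          ≤ ((n / 2 / 2 + 1 : ℕ) : ℝ) * κ + ((n / 2 / 2 : ℕ) : ℝ) * η := by
        push_cast; linarith
      exact min_eq_right this
    · have hv : Even ((u + ((n / 2 : ℕ) : ZMod n)).val) := by
        rw [hpar, Nat.even_add]
        simp [Nat.not_even_iff_odd.mpr hu, hodd]
      rw [if_neg (Nat.not_even_iff_odd.mpr hu), if_pos hv]
      have : ((n / 2 / 2 : ℕ) : ℝ) * κ + ((n / 2 / 2 + 1 : ℕ) : ℝ) * η
          ≤ ((n / 2 / 2 + 1 : ℕ) : ℝ) * κ + ((n / 2 / 2 : ℕ) : ℝ) * η := by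
        push_cast; linarith
      exact min_eq_left this

theorem wiener_index_decomposition
    (n : ℕ) [NeZero n] (hE : Even n) (h4 : 4 ≤ n) (κ η : ℝ) (hηκ : η ≤ κ) :
    WI n κ η =
      ((n : ℝ) ^ 2 / 8) * (κ + η) * (if 4 ∣ n then 1 else 0) +
      ((n : ℝ) / 2) * ((((n : ℝ) - 2) / 4) * κ + (((n : ℝ) + 2) / 4) * η) *
        (if 4 ∣ n then 0 else 1) +
      ∑ k ∈ Finset.Icc 1 (n / 2 - 1), ((n : ℝ) * (k : ℝ) / 2) * (κ + η) := by
  classical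
  set h := n / 2 with hh
  have hh2 : 2 * h = n := by
    obtain ⟨t, ht⟩ := hE; omega
  have hhge : 2 ≤ h := by omega
  set S : ℝ := ((h : ℕ) : ℝ) * (κ + η) with hS
  set M : ℝ := if 4 ∣ n then ((n / 4 : ℕ) : ℝ) * (κ + η)
      else ((h / 2 : ℕ) : ℝ) * κ + ((h / 2 + 1 : ℕ) : ℝ) * η with hM
  -- Step 1: rewrite inner sums
  have step1 : ∑ u : ZMod n, ∑ v : ZMod n, ds n κ η u v
      = ∑ m ∈ Finset.range n, ∑ u : ZMod n, ds n κ η u (u + (m : ZMod n)) := by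
    have inner : ∀ u : ZMod n, ∑ v : ZMod n, ds n κ η u v
        = ∑ m ∈ Finset.range n, ds n κ η u (u + (m : ZMod n)) := by
      intro u
      rw [← zmod_sum_shift n (fun v => ds n κ η u v) u,
        zmod_sum_range n (fun v => ds n κ η u (v + u))]
      exact Finset.sum_congr rfl fun m _ => by rw [add_comm]
    rw [Finset.sum_congr rfl fun u _ => inner u, Finset.sum_comm]
  -- Step 2: evaluate each inner sum
  have step2 : ∀ m ∈ Finset.range n, ∑ u : ZMod n, ds n κ η u (u + (m : ZMod n))
      = if m = 0 then 0
        else if m < h then (m : ℝ) * S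
        else if m = h then (n : ℝ) * M
        else ((n - m : ℕ) : ℝ) * S := by
    intro m hm
    rw [Finset.mem_range] at hm
    by_cases hm0 : m = 0
    · subst hm0
      simp [ds]
    rw [if_neg hm0]
    have hds : ∀ u : ZMod n, ds n κ η u (u + (m : ZMod n))
        = if m < h then A n κ η u m
          else if m = h then
            min (A n κ η u h) (A n κ η (u + (m : ZMod n)) h)
          else A n κ η (u + (m : ZMod n)) (n - m) := by
      intro u
      rw [ds_formula n hE κ η u m hm hm0, ← hh]
    rw [Finset.sum_congr rfl fun u _ => hds u]
    by_cases h1 : m < h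
    · rw [if_pos h1]
      simp only [if_pos h1]
      rw [sum_A n hE, ← hh, hS]
    rw [if_neg h1]
    simp only [if_neg h1]
    by_cases h2 : m = h
    · subst h2
      simp only [eq_self_iff_true, if_true]
      have : ∀ u : ZMod n, min (A n κ η u h) (A n κ η (u + ((h : ℕ) : ZMod n)) h) = M := by
        intro u
        have := antipodal n hE h4 κ η hηκ u
        rw [← hh] at this
        rw [this, hM]
      rw [Finset.sum_congr rfl fun u _ => this u, Finset.sum_const, Finset.card_univ,
        ZMod.card, nsmul_eq_mul]
    · simp only [if_neg h2]
      rw [zmod_sum_shift n (fun x => A n κ η x (n - m)) ((m : ℕ) : ZMod n),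
        sum_A n hE, ← hh, hS]
  -- Step 3: sum over m
  have step3 : ∑ m ∈ Finset.range n,
      (if m = 0 then (0:ℝ)
        else if m < h then (m : ℝ) * S
        else if m = h then (n : ℝ) * M
        else ((n - m : ℕ) : ℝ) * S)
      = (n : ℝ) * M + 2 * ∑ k ∈ Finset.Ico 1 h, (k : ℝ) * S := by
    set g : ℕ → ℝ := fun m =>
      if m = 0 then (0:ℝ)
        else if m < h then (m : ℝ) * S
        else if m = h then (n : ℝ) * M
        else ((n - m : ℕ) : ℝ) * S with hg
    rw [Finset.range_eq_Ico,
      ← Finset.sum_Ico_consecutive g (by omega : (0:ℕ) ≤ 1) (by omega : 1 ≤ n),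
      ← Finset.sum_Ico_consecutive g (by omega : (1:ℕ) ≤ h) (by omega : h ≤ n),
      ← Finset.sum_Ico_consecutive g (by omega : h ≤ h + 1) (by omega : h + 1 ≤ n)]
    have e0 : ∑ m ∈ Finset.Ico 0 1, g m = 0 := by
      rw [Nat.Ico_succ_singleton, Finset.sum_singleton, hg]
      simp
    have e1 : ∑ m ∈ Finset.Ico 1 h, g m = ∑ k ∈ Finset.Ico 1 h, (k : ℝ) * S := by
      refine Finset.sum_congr rfl fun m hm => ?_
      rw [Finset.mem_Ico] at hm
      rw [hg]
      simp only [if_neg (by omega : m ≠ 0), if_pos hm.2]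
    have e2 : ∑ m ∈ Finset.Ico h (h + 1), g m = (n : ℝ) * M := by
      rw [Nat.Ico_succ_singleton, Finset.sum_singleton, hg]
      simp only [if_neg (by omega : h ≠ 0), if_neg (lt_irrefl h), eq_self_iff_true, if_true]
    have e3 : ∑ m ∈ Finset.Ico (h + 1) n, g m = ∑ k ∈ Finset.Ico 1 h, (k : ℝ) * S := by
      have ev : ∀ m ∈ Finset.Ico (h + 1) n, g m = ((n - m : ℕ) : ℝ) * S := by
        intro m hm
        rw [Finset.mem_Ico] at hm
        rw [hg]
        simp only [if_neg (by omega : m ≠ 0), if_neg (by omega : ¬ m < h),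
          if_neg (by omega : m ≠ h)]
      rw [Finset.sum_congr rfl ev]
      refine Finset.sum_nbij' (i := fun m => n - m) (j := fun k => n - k) ?_ ?_ ?_ ?_ ?_
      · intro a ha; simp only [Finset.mem_Ico] at ha ⊢; omega
      · intro a ha; simp only [Finset.mem_Ico] at ha ⊢; omega
      · intro a ha; simp only [Finset.mem_Ico] at ha; omega
      · intro a ha; simp only [Finset.mem_Ico] at ha; omega
      · intro a ha; rfl
    rw [e0, e1, e2, e3]
    ring
  rw [WI, step1, Finset.sum_congr rfl step2, step3]
  -- Step 4: final arithmetic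
  have hIcc : Finset.Icc 1 (h - 1) = Finset.Ico 1 h := by
    rw [← Finset.Ico_add_one_right_eq_Icc]
    congr 1
    omega
  rw [hIcc]
  have hnr : (n : ℝ) = 2 * (h : ℝ) := by exact_mod_cast hh2.symm
  have hsum : ∀ k ∈ Finset.Ico 1 h, ((n : ℝ) * (k : ℝ) / 2) * (κ + η) = (k : ℝ) * S := by
    intro k _
    rw [hS, hnr]
    ring
  rw [Finset.sum_congr rfl hsum]
  have key : (1:ℝ) / 2 * ((n : ℝ) * M) =
      ((n : ℝ) ^ 2 / 8) * (κ + η) * (if 4 ∣ n then 1 else 0) +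
      ((n : ℝ) / 2) * ((((n : ℝ) - 2) / 4) * κ + (((n : ℝ) + 2) / 4) * η) *
        (if 4 ∣ n then 0 else 1) := by
    by_cases hd : 4 ∣ n
    · obtain ⟨q, hq⟩ := hd
      rw [hM, if_pos ⟨q, hq⟩, if_pos ⟨q, hq⟩, if_pos ⟨q, hq⟩]
      have : n / 4 = q := by omega
      rw [this, hq]
      push_cast
      ring
    · obtain ⟨t, ht⟩ := hE
      have hq : ∃ q, n = 4 * q + 2 := ⟨(n - 2) / 4, by omega⟩
      obtain ⟨q, hq⟩ := hq
      rw [hM, if_neg hd, if_neg hd, if_neg hd]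
      have c1 : h / 2 = q := by omega
      rw [c1, hq]
      push_cast
      ring
  linarith [key]
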